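/- The rational map F: R^2 → R^2 defined by F(a_1, a_2) = (a_2, (1 + a_1)/(a_1 a_2 - 1)) satisfies F^5 = id on the open set where all iterates are defined (the Gauss map is 5-periodic). -/

import Mathlib

/-- The Gauss map. -/
noncomputable def gaussF (p : ℝ × ℝ) : ℝ × ℝ :=
  (p.2, (1 + p.1) / (p.1 * p.2 - 1))

/-- The Gauss map `F(a₁,a₂) = (a₂, (1+a₁)/(a₁a₂-1))` is 5-periodic
wherever all iterates are defined. -/
theorem stmt2 (p : ℝ × ℝ)
    (hdef : ∀ m < 5, (gaussF^[m] p).1 * (gaussF^[m] p).2 - 1 ≠ 0) :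
    gaussF^[5] p = p := by
  obtain ⟨a, b⟩ := p
  have h0 := hdef 0 (by norm_num)
  have h1 := hdef 1 (by norm_num)
  have h2 := hdef 2 (by norm_num)
  have h3 := hdef 3 (by norm_num)
  have h4 := hdef 4 (by norm_num)
  simp only [Function.iterate_succ, Function.iterate_zero, Function.comp_apply, id_eq,
    gaussF] at h0 h1 h2 h3 h4 ⊢
  have hb1 : b + 1 ≠ 0 := by
    intro h
    apply h1
    rw [show b * ((1 + a) / (a * b - 1)) - 1 = (b + 1) / (a * b - 1) from by
      rw [eq_div_iff h0, sub_mul, mul_assoc, div_mul_cancel₀ _ h0]; ring, h, zero_div]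
  have ha : a ≠ 0 := by
    intro h
    subst h
    apply h2
    norm_num
    rw [show (-b - 1 : ℝ) = -(b + 1) from by ring, show ((1 : ℝ) + b) = b + 1 from by ring,
      div_neg, div_self hb1]
    ring
  have d1 : b * ((1 + a) / (a * b - 1)) - 1 = (b + 1) / (a * b - 1) := by
    rw [eq_div_iff h0, sub_mul, mul_assoc, div_mul_cancel₀ _ h0]; ring
  have d2 : (1 + b) / (b * ((1 + a) / (a * b - 1)) - 1) = a * b - 1 := by
    rw [d1, div_div_eq_mul_div]
    field_simp
    ring
  rw [d2] at h2 h3 h4 ⊢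
  have d3 : (1 + a) / (a * b - 1) * (a * b - 1) - 1 = a := by
    field_simp
    ring
  rw [d3] at h2 h3 h4 ⊢
  have d4 : (1 + (1 + a) / (a * b - 1)) / a = (b + 1) / (a * b - 1) := by
    rw [div_eq_div_iff ha h0]
    field_simp
    ring
  rw [d4] at h3 h4 ⊢
  have hb : b ≠ 0 := by
    intro h; subst h; apply h3
    rw [show ((0:ℝ) + 1) / (a * 0 - 1) = -1 from by norm_num]
    ring
  have d5 : (a * b - 1) * ((b + 1) / (a * b - 1)) - 1 = b := by
    field_simp
    ring
  rw [d5] at h4 ⊢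
  have d6 : (1 + (a * b - 1)) / b = a := by
    rw [div_eq_iff hb]; ring
  rw [d6] at h4 ⊢
  have ha1 : a + 1 ≠ 0 := by
    intro h
    have haa : a = -1 := by linarith
    subst haa
    apply h4
    rw [show (-1 * b - 1 : ℝ) = -(b + 1) from by ring, div_neg, div_self hb1]
    ring
  have d7 : (b + 1) / (a * b - 1) * a - 1 = (a + 1) / (a * b - 1) := by
    rw [eq_div_iff h0, sub_mul, div_mul_eq_mul_div, div_mul_cancel₀ _ h0]; ring
  rw [d7]
  have d8 : (1 + (b + 1) / (a * b - 1)) / ((a + 1) / (a * b - 1)) = b := by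
    rw [div_eq_iff (div_ne_zero ha1 h0)]
    rw [mul_div_assoc', eq_div_iff h0, add_mul, div_mul_cancel₀ _ h0]
    ring
  rw [d8]
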